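/- Let G ∈ ℝ^{m×n} be such that G·Gᵀ is invertible, let L ∈ ℝ^{m×m} be invertible, and let R = λQ where λ ∈ ℝ, λ ≠ 0, and Q ∈ ℝ^{n×n} is orthogonal. Set G' = L⁻ᵀ G R⁻ᵀ. Then G'·G'ᵀ is invertible and (G'·G'ᵀ)⁻¹ G' = L·(G·Gᵀ)⁻¹·G·R. -/

import Mathlib

open scoped Matrix

/-- If `G Gᵀ` is invertible, `L` is invertible and `R = λ Q` with `λ ≠ 0` and
`Q` orthogonal, then setting `G' = L⁻ᵀ G R⁻ᵀ`, the matrix `G' G'ᵀ` is invertible and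
`(G' G'ᵀ)⁻¹ G' = L (G Gᵀ)⁻¹ G R`. -/
theorem stmt6 {m n : ℕ}
    (G : Matrix (Fin m) (Fin n) ℝ) (hG : IsUnit (G * Gᵀ))
    (L : Matrix (Fin m) (Fin m) ℝ) (hL : IsUnit L)
    (lam : ℝ) (hlam : lam ≠ 0)
    (Q : Matrix (Fin n) (Fin n) ℝ) (hQ : Qᵀ * Q = 1)
    (R : Matrix (Fin n) (Fin n) ℝ) (hR : R = lam • Q)
    (G' : Matrix (Fin m) (Fin n) ℝ) (hG' : G' = (L⁻¹)ᵀ * G * (R⁻¹)ᵀ) :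
    IsUnit (G' * G'ᵀ) ∧ (G' * G'ᵀ)⁻¹ * G' = L * (G * Gᵀ)⁻¹ * G * R := by
  have hLd : IsUnit L.det := (Matrix.isUnit_iff_isUnit_det L).mp hL
  have hGd : IsUnit (G * Gᵀ).det := (Matrix.isUnit_iff_isUnit_det _).mp hG
  have hL1 : L * L⁻¹ = 1 := Matrix.mul_nonsing_inv L hLd
  have hL2 : L⁻¹ * L = 1 := Matrix.nonsing_inv_mul L hLd
  have hG1 : (G * Gᵀ) * (G * Gᵀ)⁻¹ = 1 := Matrix.mul_nonsing_inv _ hGd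
  have hQQ : Q * Qᵀ = 1 := mul_eq_one_comm.mp hQ
  have hRinv : R⁻¹ = lam⁻¹ • Qᵀ := by
    apply Matrix.inv_eq_right_inv
    rw [hR, Matrix.smul_mul, Matrix.mul_smul, smul_smul, hQQ,
      mul_inv_cancel₀ hlam, one_smul]
  have hLt1 : (L⁻¹)ᵀ * Lᵀ = 1 := by
    rw [← Matrix.transpose_mul, hL1, Matrix.transpose_one]
  have hLt2 : Lᵀ * (L⁻¹)ᵀ = 1 := by
    rw [← Matrix.transpose_mul, hL2, Matrix.transpose_one]
  have hG'eq : G' = lam⁻¹ • ((L⁻¹)ᵀ * G * Q) := by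
    rw [hG', hRinv]
    rw [Matrix.transpose_smul, Matrix.transpose_transpose, Matrix.mul_smul]
  set N : Matrix (Fin m) (Fin m) ℝ := (lam * lam) • (L * (G * Gᵀ)⁻¹ * Lᵀ) with hN
  have hMeq : G' * G'ᵀ = (lam⁻¹ * lam⁻¹) • ((L⁻¹)ᵀ * (G * Gᵀ) * L⁻¹) := by
    rw [hG'eq, Matrix.transpose_smul, Matrix.smul_mul, Matrix.mul_smul, smul_smul]
    congr 1
    rw [Matrix.transpose_mul, Matrix.transpose_mul, Matrix.transpose_transpose]
    calc (L⁻¹)ᵀ * G * Q * (Qᵀ * (Gᵀ * L⁻¹))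
        = (L⁻¹)ᵀ * G * (Q * Qᵀ) * (Gᵀ * L⁻¹) := by
          simp only [Matrix.mul_assoc]
      _ = (L⁻¹)ᵀ * (G * Gᵀ) * L⁻¹ := by
          rw [hQQ, Matrix.mul_one]; simp only [Matrix.mul_assoc]
  have hMN : (G' * G'ᵀ) * N = 1 := by
    rw [hMeq, hN, Matrix.smul_mul, Matrix.mul_smul, smul_smul]
    have : lam⁻¹ * lam⁻¹ * (lam * lam) = 1 := by field_simp
    rw [this, one_smul]
    calc (L⁻¹)ᵀ * (G * Gᵀ) * L⁻¹ * (L * (G * Gᵀ)⁻¹ * Lᵀ)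
        = (L⁻¹)ᵀ * ((G * Gᵀ) * ((L⁻¹ * L) * ((G * Gᵀ)⁻¹ * Lᵀ))) := by
          simp only [Matrix.mul_assoc]
      _ = 1 := by
          rw [hL2, Matrix.one_mul, ← Matrix.mul_assoc (G * Gᵀ), hG1,
            Matrix.one_mul, hLt1]
  have hunit : IsUnit (G' * G'ᵀ) := by
    rw [Matrix.isUnit_iff_isUnit_det]
    refine IsUnit.of_mul_eq_one N.det ?_
    rw [← Matrix.det_mul, hMN, Matrix.det_one]
  refine ⟨hunit, ?_⟩
  rw [Matrix.inv_eq_right_inv hMN, hG'eq, hN, hR]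
  rw [Matrix.smul_mul, Matrix.mul_smul, smul_smul, Matrix.mul_smul]
  have : lam * lam * lam⁻¹ = lam := by field_simp
  rw [this]
  congr 1
  calc L * (G * Gᵀ)⁻¹ * Lᵀ * ((L⁻¹)ᵀ * G * Q)
      = L * (G * Gᵀ)⁻¹ * ((Lᵀ * (L⁻¹)ᵀ) * (G * Q)) := by
        simp only [Matrix.mul_assoc]
    _ = L * (G * Gᵀ)⁻¹ * G * Q := by
        rw [hLt2, Matrix.one_mul]; simp only [Matrix.mul_assoc]
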